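/- Let A be a unital C*-algebra, n ∈ ℕ, and let u_{ij} ∈ A (1 ≤ i,j ≤ n) satisfy u_{ij}* = u_{ij}, each u_{ij}² a central projection, and Σ_{j=1}^n u_{ij}² = 1 = Σ_{i=1}^n u_{ij}² for all i,j. Let p ∈ P(k,0). Then the intertwining relations of T̂_p^(n), namely Σ_{f ∈ {1,…,n}^k} δ̂_p(f) · u_{f₁i₁} ⋯ u_{f_ki_k} = δ̂_p(i) · 1 for all i ∈ {1,…,n}^k, hold if and only if p has more than n blocks or Σ_{f ∈ {1,…,n}^k} u_{f₁i₁} ⋯ u_{f_ki_k} = 1 for all i = (i₁,…,i_k) ∈ S_n(ind(p)). -/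

import Mathlib

attribute [local instance] Classical.propDecidable

noncomputable section

namespace GTQG

/-! ## Partitions -/

/-- The set `P(k,l)` of partitions of `{1,…,k,1',…,l'}`, encoded as equivalence
relations (i.e. set partitions) on the disjoint union `Fin k ⊕ Fin l`. -/
abbrev Part (k l : ℕ) : Type := Setoid (Fin k ⊕ Fin l)

/-- `ker(i,j)`: the partition whose blocks are the fibers of the labelling
`x ↦ i x` on upper points and `y ↦ j y` on lower points. -/
def kerPartA {α : Type*} {k l : ℕ} (i : Fin k → α) (j : Fin l → α) : Part k l :=
  Setoid.ker (Sum.elim i j)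

/-- `ker(i,j)` for `ℕ`-valued multi-indices. -/
abbrev kerPart {k l : ℕ} (i : Fin k → ℕ) (j : Fin l → ℕ) : Part k l := kerPartA i j

/-- `ker(i) = ker(i,∅) ∈ P(k,0)`. -/
def kerPart0 {k : ℕ} (i : Fin k → ℕ) : Part k 0 := kerPartA i Fin.elim0

/-- The pair partition `⊔ ∈ P(0,2)`. -/
def pairPart : Part 0 2 := kerPartA Fin.elim0 (fun _ => (1 : ℕ))

/-- The identity partition `| ∈ P(1,1)`. -/
def idPart : Part 1 1 := kerPartA (fun _ => (1 : ℕ)) (fun _ => (1 : ℕ))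

/-- The partition `p̂ = ker((1,1,2),(2,1,1)) ∈ P(3,3)`. -/
def pHat : Part 3 3 := kerPart ![1, 1, 2] ![2, 1, 1]

/-- The involution `p* ∈ P(l,k)`, turning `p` upside-down. -/
def invol {k l : ℕ} (p : Part k l) : Part l k := Setoid.comap Sum.swap p

/-- The number of blocks of a partition. -/
def blockCount {k l : ℕ} (p : Part k l) : ℕ := Nat.card (Quotient p)

/-- The restriction of `p` to its upper row. -/
def upperSetoid {k l : ℕ} (p : Part k l) : Setoid (Fin k) := Setoid.comap Sum.inl p

/-- The restriction of `p` to its lower row. -/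
def lowerSetoid {k l : ℕ} (p : Part k l) : Setoid (Fin l) := Setoid.comap Sum.inr p

/-- `p ∈ P(k,l)` and `q ∈ P(l,l')` are compatible if the lower row of `p`
and the upper row of `q` have the same block structure
(i.e. `j^(p) ∈ S_∞(i^(q))`). -/
def Compatible {k l l' : ℕ} (p : Part k l) (q : Part l l') : Prop :=
  lowerSetoid p = upperSetoid q

section Comp

variable {k l l' : ℕ}

/-- The points of the vertical concatenation of `p ∈ P(k,l)` and `q ∈ P(l,l')`:
`k` upper points, `l` middle points, `l'` lower points. -/
abbrev CompCarrier (k l l' : ℕ) : Type := Fin k ⊕ (Fin l ⊕ Fin l')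

/-- Inclusion of the points of `p` into the vertical concatenation. -/
def topIncl : Fin k ⊕ Fin l → CompCarrier k l l' := Sum.map id Sum.inl

/-- Inclusion of the points of `q` into the vertical concatenation. -/
def botIncl : Fin l ⊕ Fin l' → CompCarrier k l l' := Sum.inr

/-- Two points of the vertical concatenation are directly connected if they are
connected by a string of `p` or by a string of `q`. -/
def compRel (p : Part k l) (q : Part l l') :
    CompCarrier k l l' → CompCarrier k l l' → Prop := fun x y =>
  (∃ u v, p u v ∧ x = topIncl u ∧ y = topIncl v) ∨
  (∃ u v, q u v ∧ x = botIncl u ∧ y = botIncl v)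

/-- The partition of all points of the vertical concatenation of `p` and `q`
into connected components. -/
def middleJoin (p : Part k l) (q : Part l l') : Setoid (CompCarrier k l l') :=
  Relation.EqvGen.setoid (compRel p q)

/-- The composition `qp ∈ P(k,l')`: vertical concatenation with all loops removed. -/
def compPart (p : Part k l) (q : Part l l') : Part k l' :=
  Setoid.comap (Sum.map id Sum.inr) (middleJoin p q)

/-- A point of the vertical concatenation is a middle point. -/
def IsMiddle (x : CompCarrier k l l') : Prop := ∃ m : Fin l, x = Sum.inr (Sum.inl m)

/-- The number `l(q,p)` of loops in the vertical concatenation of `p` and `q`: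
connected components consisting entirely of middle points. -/
def loopCount (p : Part k l) (q : Part l l') : ℕ :=
  Nat.card {c : Quotient (middleJoin p q) //
    ∀ x : CompCarrier k l l', Quotient.mk (middleJoin p q) x = c → IsMiddle x}

end Comp

/-- The direct sum of two set partitions. -/
def sumSetoid {α β : Type*} (p : Setoid α) (q : Setoid β) : Setoid (α ⊕ β) :=
  Setoid.ker (Sum.map (Quotient.mk p) (Quotient.mk q))

/-- The tensor product `p ⊗ q ∈ P(k+k',l+l')`: horizontal concatenation. -/
def tensorPart {k l k' l' : ℕ} (p : Part k l) (q : Part k' l') : Part (k + k') (l + l') :=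
  Setoid.comap
    (Sum.elim
      (fun z => Fin.addCases (fun a => Sum.inl (Sum.inl a)) (fun b => Sum.inr (Sum.inl b)) z)
      (fun z => Fin.addCases (fun a => Sum.inl (Sum.inr a)) (fun b => Sum.inr (Sum.inr b)) z))
    (sumSetoid p q)

/-! ## Rotations -/

/-- Rotating the outermost left upper leg to the lower row (reindexing map). -/
def rotULDmap (k l : ℕ) : Fin k ⊕ Fin (l + 1) → Fin (k + 1) ⊕ Fin l
  | .inl x => .inl x.succ
  | .inr y => Fin.cases (Sum.inl 0) (fun i => Sum.inr i) y

/-- Rotating the outermost left upper leg to the lower row. -/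
def rotULD {k l : ℕ} (p : Part (k + 1) l) : Part k (l + 1) :=
  Setoid.comap (rotULDmap k l) p

/-- Rotating the outermost left lower leg to the upper row (reindexing map). -/
def rotDLUmap (k l : ℕ) : Fin (k + 1) ⊕ Fin l → Fin k ⊕ Fin (l + 1)
  | .inl x => Fin.cases (Sum.inr 0) (fun i => Sum.inl i) x
  | .inr y => .inr y.succ

/-- Rotating the outermost left lower leg to the upper row. -/
def rotDLU {k l : ℕ} (p : Part k (l + 1)) : Part (k + 1) l :=
  Setoid.comap (rotDLUmap k l) p

/-- Rotating the outermost right upper leg to the lower row (reindexing map). -/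
def rotURDmap (k l : ℕ) : Fin k ⊕ Fin (l + 1) → Fin (k + 1) ⊕ Fin l
  | .inl x => .inl x.castSucc
  | .inr y => Fin.lastCases (Sum.inl (Fin.last k)) (fun i => Sum.inr i) y

/-- Rotating the outermost right upper leg to the lower row. -/
def rotURD {k l : ℕ} (p : Part (k + 1) l) : Part k (l + 1) :=
  Setoid.comap (rotURDmap k l) p

/-- Rotating the outermost right lower leg to the upper row (reindexing map). -/
def rotDRUmap (k l : ℕ) : Fin (k + 1) ⊕ Fin l → Fin k ⊕ Fin (l + 1)
  | .inl x => Fin.lastCases (Sum.inr (Fin.last l)) (fun i => Sum.inl i) x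
  | .inr y => .inr y.castSucc

/-- Rotating the outermost right lower leg to the upper row. -/
def rotDRU {k l : ℕ} (p : Part k (l + 1)) : Part (k + 1) l :=
  Setoid.comap (rotDRUmap k l) p

/-- One basic rotation step between partitions (with varying numbers of
upper and lower points). -/
inductive BasicRot : (Σ k l : ℕ, Part k l) → (Σ k l : ℕ, Part k l) → Prop
  | uld {k l : ℕ} (p : Part (k + 1) l) : BasicRot ⟨k + 1, l, p⟩ ⟨k, l + 1, rotULD p⟩
  | dlu {k l : ℕ} (p : Part k (l + 1)) : BasicRot ⟨k, l + 1, p⟩ ⟨k + 1, l, rotDLU p⟩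
  | urd {k l : ℕ} (p : Part (k + 1) l) : BasicRot ⟨k + 1, l, p⟩ ⟨k, l + 1, rotURD p⟩
  | dru {k l : ℕ} (p : Part k (l + 1)) : BasicRot ⟨k, l + 1, p⟩ ⟨k + 1, l, rotDRU p⟩

/-- `IsRotationOf q p`: `q` is obtained from `p` by finitely many basic rotations. -/
def IsRotationOf (q p : Σ k l : ℕ, Part k l) : Prop := Relation.ReflTransGen BasicRot p q

/-- A family `R ⊆ P` is closed under rotation. -/
def RotationClosed (R : ∀ k l : ℕ, Set (Part k l)) : Prop :=
  ∀ {k l k' l' : ℕ} (p : Part k l) (q : Part k' l'),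
    p ∈ R k l → IsRotationOf ⟨k', l', q⟩ ⟨k, l, p⟩ → q ∈ R k' l'

/-! ## (Skew) categories of partitions -/

/-- A skew category of partitions: a collection `R ⊆ P` containing `⊔` and `|`,
closed under involution, connected tensor products and conditioned composition. -/
structure IsSkewCategory (R : ∀ k l : ℕ, Set (Part k l)) : Prop where
  pair_mem : pairPart ∈ R 0 2
  id_mem : idPart ∈ R 1 1
  invol_mem : ∀ {k l : ℕ} {p : Part k l}, p ∈ R k l → invol p ∈ R l k
  conn_tensor_mem : ∀ {k l k' l' : ℕ} {p : Part k l} {q : Part k' l'}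
      (i : Fin k → ℕ) (j : Fin l → ℕ) (f : Fin k' → ℕ) (g : Fin l' → ℕ),
      p ∈ R k l → q ∈ R k' l' → kerPart i j = p → kerPart f g = q →
      kerPart (Fin.append i f) (Fin.append j g) ∈ R (k + k') (l + l')
  cond_comp_mem : ∀ {k l l' : ℕ} {p : Part k l} {q : Part l l'},
      p ∈ R k l → q ∈ R l l' → Compatible p q → compPart p q ∈ R k l'

/-- A category of partitions: a collection `C ⊆ P` containing `⊔` and `|`,
closed under involution, tensor products and composition. -/
structure IsCategoryOfPartitions (C : ∀ k l : ℕ, Set (Part k l)) : Prop where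
  pair_mem : pairPart ∈ C 0 2
  id_mem : idPart ∈ C 1 1
  invol_mem : ∀ {k l : ℕ} {p : Part k l}, p ∈ C k l → invol p ∈ C l k
  tensor_mem : ∀ {k l k' l' : ℕ} {p : Part k l} {q : Part k' l'},
      p ∈ C k l → q ∈ C k' l' → tensorPart p q ∈ C (k + k') (l + l')
  comp_mem : ∀ {k l l' : ℕ} {p : Part k l} {q : Part l l'},
      p ∈ C k l → q ∈ C l l' → compPart p q ∈ C k l'

/-- The skew category of partitions generated by a family `E`. -/
def skewGenerated (E : ∀ k l : ℕ, Set (Part k l)) : ∀ k l : ℕ, Set (Part k l) :=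
  fun k l => { p | ∀ R : ∀ k l : ℕ, Set (Part k l),
    IsSkewCategory R → (∀ k' l' : ℕ, E k' l' ⊆ R k' l') → p ∈ R k l }

/-- The category of partitions generated by a family `E`. -/
def catGenerated (E : ∀ k l : ℕ, Set (Part k l)) : ∀ k l : ℕ, Set (Part k l) :=
  fun k l => { p | ∀ C : ∀ k l : ℕ, Set (Part k l),
    IsCategoryOfPartitions C → (∀ k' l' : ℕ, E k' l' ⊆ C k' l') → p ∈ C k l }

end GTQG
namespace GTQG

/-! ## The free products `ℤ₂^{*∞}` and `ℤ₂^{*n}` -/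

/-- The cyclic group of order two (written multiplicatively). -/
abbrev Z2 : Type := Multiplicative (ZMod 2)

/-- `ℤ₂^{*∞}`, the free product of countably many copies of `ℤ₂`. -/
abbrev FreeZ2 : Type := Monoid.CoprodI (fun _ : ℕ => Z2)

/-- `ℤ₂^{*n}`, the free product of `n` copies of `ℤ₂`. -/
abbrev FreeZ2n (n : ℕ) : Type := Monoid.CoprodI (fun _ : Fin n => Z2)

/-- The generator `a_i` of `ℤ₂^{*∞}`. -/
def gen (i : ℕ) : FreeZ2 := Monoid.CoprodI.of (i := i) (Multiplicative.ofAdd (1 : ZMod 2))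

/-- The generator `a_i` of `ℤ₂^{*n}`. -/
def genn {n : ℕ} (i : Fin n) : FreeZ2n n :=
  Monoid.CoprodI.of (i := i) (Multiplicative.ofAdd (1 : ZMod 2))

/-- The word `a_i = a_{i₁} ⋯ a_{i_k} ∈ ℤ₂^{*∞}` associated to a multi-index. -/
def aWord {k : ℕ} (i : Fin k → ℕ) : FreeZ2 := (List.ofFn fun x => gen (i x)).prod

/-- The word `a_i = a_{i₁} ⋯ a_{i_k} ∈ ℤ₂^{*n}` associated to a multi-index. -/
def aWordn {n k : ℕ} (i : Fin k → Fin n) : FreeZ2n n := (List.ofFn fun x => genn (i x)).prod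

/-- The natural embedding `ℤ₂^{*n} → ℤ₂^{*∞}`. -/
def incl (n : ℕ) : FreeZ2n n →* FreeZ2 :=
  Monoid.CoprodI.lift (fun i => Monoid.CoprodI.of (M := fun _ : ℕ => Z2) (i := (i : ℕ)))

/-- The endomorphism of `ℤ₂^{*∞}` induced by a map `σ : ℕ → ℕ`, `a_i ↦ a_{σ i}`.
For bijective `σ` this is the action of `S_∞`, in general that of `sS_∞`. -/
def permEndo (σ : ℕ → ℕ) : FreeZ2 →* FreeZ2 :=
  Monoid.CoprodI.lift (fun i => Monoid.CoprodI.of (M := fun _ : ℕ => Z2) (i := σ i))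

/-- The endomorphism of `ℤ₂^{*n}` induced by a map `σ : Fin n → Fin n`. -/
def permEndon {n : ℕ} (σ : Fin n → Fin n) : FreeZ2n n →* FreeZ2n n :=
  Monoid.CoprodI.lift (fun i => Monoid.CoprodI.of (M := fun _ : Fin n => Z2) (i := σ i))

/-- A map `ℕ → ℕ` is finitely supported (moves only finitely many points). -/
def FinitelySupported (σ : ℕ → ℕ) : Prop := {x | σ x ≠ x}.Finite

/-- `F_∞(D) = S_∞({a_{ind(p)} : p ∈ D(k,0)})`, the set of all words `a_i` with
`ker(i) ∈ D(k,0)` (the `S_∞`-orbit of the words of minimal-index labellings). -/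
def Finfty (D : ∀ k l : ℕ, Set (Part k l)) : Set FreeZ2 :=
  { g | ∃ (k : ℕ) (i : Fin k → ℕ), kerPart0 i ∈ D k 0 ∧ g = aWord i }

end GTQG
namespace GTQG

/-! ## The maps `T̂_p` and `T_p` -/

/-- `(ℂ^n)^{⊗k}`, realised as functions on multi-indices (the standard basis
`e_{i₁} ⊗ ⋯ ⊗ e_{i_k}` is indexed by multi-indices `i ∈ {1,…,n}^k`). -/
abbrev MV (n k : ℕ) : Type := (Fin k → Fin n) → ℂ

/-- `δ̂_p(i,j) = 1` iff `(i,j) ∈ S_∞(ind(p))`, i.e. iff `ker(i,j) = p`. -/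
def hatDelta {k l : ℕ} (p : Part k l) {n : ℕ} (i : Fin k → Fin n) (j : Fin l → Fin n) : ℂ :=
  if kerPartA i j = p then 1 else 0

/-- `δ_p(i,j) = 1` iff `(i,j) ∈ sS_∞(ind(p))`, i.e. iff the labelling `(i,j)`
is constant on the blocks of `p`. -/
def softDelta {k l : ℕ} (p : Part k l) {n : ℕ} (i : Fin k → Fin n) (j : Fin l → Fin n) : ℂ :=
  if p ≤ kerPartA i j then 1 else 0

/-- The linear map `T̂_p^(n) : (ℂ^n)^{⊗k} → (ℂ^n)^{⊗l}`. -/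
def hatT (n : ℕ) {k l : ℕ} (p : Part k l) : MV n k →ₗ[ℂ] MV n l :=
  Matrix.mulVecLin (Matrix.of fun (j : Fin l → Fin n) (i : Fin k → Fin n) => hatDelta p i j)

/-- The linear map `T_p^(n) : (ℂ^n)^{⊗k} → (ℂ^n)^{⊗l}` of Banica–Speicher. -/
def softT (n : ℕ) {k l : ℕ} (p : Part k l) : MV n k →ₗ[ℂ] MV n l :=
  Matrix.mulVecLin (Matrix.of fun (j : Fin l → Fin n) (i : Fin k → Fin n) => softDelta p i j)

/-- The tensor product of linear maps, under the identification
`(ℂ^n)^{⊗k} ⊗ (ℂ^n)^{⊗k'} ≅ (ℂ^n)^{⊗(k+k')}` of basis vectors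
`(e_{i} ⊗ e_{f} ↦ e_{if}`, concatenation of multi-indices). -/
def tensorMap {n k l k' l' : ℕ} (S : MV n k →ₗ[ℂ] MV n l) (T : MV n k' →ₗ[ℂ] MV n l') :
    MV n (k + k') →ₗ[ℂ] MV n (l + l') :=
  Matrix.mulVecLin (Matrix.of fun (x : Fin (l + l') → Fin n) (y : Fin (k + k') → Fin n) =>
    LinearMap.toMatrix' S (fun a => x (Fin.castAdd l' a)) (fun a => y (Fin.castAdd k' a)) *
    LinearMap.toMatrix' T (fun b => x (Fin.natAdd l b)) (fun b => y (Fin.natAdd k b)))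

/-- The adjoint of a linear map `(ℂ^n)^{⊗k} → (ℂ^n)^{⊗l}` with respect to the
standard Hermitian inner products (conjugate-transpose of the matrix in the
standard bases). -/
def adjointMap {n k l : ℕ} (S : MV n k →ₗ[ℂ] MV n l) : MV n l →ₗ[ℂ] MV n k :=
  Matrix.mulVecLin (LinearMap.toMatrix' S).conjTranspose

/-- The map `ζ : ℂ → (ℂ^n)^{⊗2}`, `1 ↦ Σᵢ eᵢ ⊗ eᵢ`. -/
def zetaMap (n : ℕ) : MV n 0 →ₗ[ℂ] MV n 2 :=
  Matrix.mulVecLin (Matrix.of fun (j : Fin 2 → Fin n) (_ : Fin 0 → Fin n) =>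
    if j 0 = j 1 then (1 : ℂ) else 0)

/-- A tensor category with duals (of subspaces of `Hom((ℂ^n)^{⊗k}, (ℂ^n)^{⊗l})`). -/
structure IsTensorCategoryWithDuals (n : ℕ)
    (H : ∀ k l : ℕ, Submodule ℂ (MV n k →ₗ[ℂ] MV n l)) : Prop where
  tensor_mem : ∀ {k l k' l' : ℕ} (S : MV n k →ₗ[ℂ] MV n l) (T : MV n k' →ₗ[ℂ] MV n l'),
      S ∈ H k l → T ∈ H k' l' → tensorMap S T ∈ H (k + k') (l + l')
  comp_mem : ∀ {k l l' : ℕ} (S : MV n k →ₗ[ℂ] MV n l) (T : MV n l →ₗ[ℂ] MV n l'),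
      S ∈ H k l → T ∈ H l l' → T ∘ₗ S ∈ H k l'
  adjoint_mem : ∀ {k l : ℕ} (S : MV n k →ₗ[ℂ] MV n l), S ∈ H k l → adjointMap S ∈ H l k
  id_mem : LinearMap.id ∈ H 1 1
  zeta_mem : zetaMap n ∈ H 0 2

/-- The collection of subspaces `span{T̂_p^(n) : p ∈ R(k,l)}`. -/
def spanOf (n : ℕ) (R : ∀ k l : ℕ, Set (Part k l)) :
    ∀ k l : ℕ, Submodule ℂ (MV n k →ₗ[ℂ] MV n l) :=
  fun k l => Submodule.span ℂ {T | ∃ p ∈ R k l, T = hatT n p}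

/-- All connected tensor products of `p` and `q`. -/
def connTensorSet {k l k' l' : ℕ} (p : Part k l) (q : Part k' l') :
    Set (Part (k + k') (l + l')) :=
  { r | ∃ (i : Fin k → ℕ) (j : Fin l → ℕ) (f : Fin k' → ℕ) (g : Fin l' → ℕ),
      kerPart i j = p ∧ kerPart f g = q ∧ r = kerPart (Fin.append i f) (Fin.append j g) }

/-- All connected conditioned compositions of `p` and `q`. -/
def connCompSet {k l l' : ℕ} (p : Part k l) (q : Part l l') : Set (Part k l') :=
  { r | ∃ (i : Fin k → ℕ) (h : Fin l → ℕ) (g : Fin l' → ℕ),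
      kerPart i h = p ∧ kerPart h g = q ∧ r = kerPart i g }

end GTQG
namespace GTQG


section StmtAux

variable {A : Type*} [CStarAlgebra A]

/-- A self-adjoint element whose square is idempotent satisfies `x * x² = x`. -/
lemma aux_cube_eq_self {x : A} (hx : star x = x) (hidem : IsIdempotentElem (x ^ 2)) :
    x * x ^ 2 = x := by
  have h4 : x ^ 4 = x ^ 2 := by
    rw [show (4:ℕ) = 2 + 2 from rfl, pow_add]; exact hidem
  have h6 : x ^ 6 = x ^ 2 := by
    rw [show (6:ℕ) = 4 + 2 from rfl, pow_add, h4]; exact hidem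
  set y := x * x ^ 2 - x with hy
  have hyy : y * y = 0 := by
    have expand : y * y = x ^ 6 - x ^ 4 - x ^ 4 + x ^ 2 := by
      rw [hy]; noncomm_ring
    rw [expand, h6, h4]; abel
  have hsy : star y = y := by
    rw [hy, star_sub, star_mul, star_pow, hx]
    congr 1
    rw [← pow_succ, ← pow_succ']
  have hnorm : ‖y‖ * ‖y‖ = 0 := by
    rw [← CStarRing.norm_star_mul_self, hsy, hyy, norm_zero]
  have : y = 0 := by
    rw [← norm_eq_zero]
    exact mul_self_eq_zero.mp hnorm
  have := sub_eq_zero.mp this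
  exact this

/-- Central commuting projections summing to `1` are pairwise orthogonal. -/
lemma aux_ortho {n : ℕ} {e : Fin n → A}
    (hsa : ∀ b, IsSelfAdjoint (e b)) (hid : ∀ b, IsIdempotentElem (e b))
    (hc : ∀ b a, a * e b = e b * a) (hsum : ∑ b, e b = 1)
    {a b : Fin n} (hab : a ≠ b) : e a * e b = 0 := by
  letI := CStarAlgebra.spectralOrder A
  haveI := CStarAlgebra.spectralOrderedRing A
  have hnn : ∀ c d : Fin n, (0 : A) ≤ e c * e d := by
    intro c d
    have key : e c * e d = star (e d * e c) * (e d * e c) := by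
      rw [star_mul, (hsa c).star_eq, (hsa d).star_eq]
      have h1 : e c * e d * (e d * e c) = e c * (e d * e d) * e c := by
        rw [← mul_assoc, mul_assoc (e c)]
      rw [h1, hid d]
      have h2 : e c * e d * e c = e c * (e c * e d) := by
        rw [mul_assoc, ← hc c (e d)]
      rw [h2, ← mul_assoc, hid c]
    rw [key]
    exact star_mul_self_nonneg _
  have hzero : ∑ c ∈ Finset.univ.erase a, e a * e c = 0 := by
    rw [← Finset.mul_sum]
    have herase : ∑ c ∈ Finset.univ.erase a, e c = 1 - e a := by
      have := Finset.add_sum_erase Finset.univ e (Finset.mem_univ a)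
      rw [hsum] at this
      linear_combination (norm := noncomm_ring) this
    rw [herase, mul_sub, mul_one, hid a, sub_self]
  have := (Finset.sum_eq_zero_iff_of_nonneg (fun c _ => hnn a c)).mp hzero
  exact this b (Finset.mem_erase.mpr ⟨hab.symm, Finset.mem_univ b⟩)

/-- If `x ∈ L`, `x²` is central and `x * x² = x`, then `L.prod * x² = L.prod`. -/
lemma aux_prod_mul_sq (x : A) (hc : ∀ a, a * x ^ 2 = x ^ 2 * a) (hx : x * x ^ 2 = x) :
    ∀ L : List A, x ∈ L → L.prod * x ^ 2 = L.prod := by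
  intro L hL
  induction L with
  | nil => simp at hL
  | cons a T ih =>
    rcases List.mem_cons.mp hL with h | h
    · subst h
      rw [List.prod_cons, mul_assoc, hc, ← mul_assoc, hx]
    · rw [List.prod_cons, mul_assoc, ih h]

end StmtAux

/-- Equality of kernels of multi-indices in `P(k,0)`. -/
lemma aux_kerPartA_eq_iff {n k : ℕ} (f i : Fin k → Fin n) :
    kerPartA f (fun y : Fin 0 => y.elim0) = kerPartA i (fun y : Fin 0 => y.elim0) ↔
      ∀ s t, f s = f t ↔ i s = i t := by
  constructor
  · intro h s t
    have := Setoid.ext_iff.mp h (Sum.inl s) (Sum.inl t)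
    exact this
  · intro h
    apply Setoid.ext
    rintro (s | y) (t | y')
    · exact h s t
    · exact y'.elim0
    · exact y.elim0
    · exact y.elim0

/-- The kernel of a multi-index with values in `Fin n` has at most `n` blocks. -/
lemma aux_blockCount_ker_le {n k : ℕ} (i : Fin k → Fin n) :
    blockCount (kerPartA i (fun y : Fin 0 => y.elim0)) ≤ n := by
  unfold blockCount kerPartA
  calc Nat.card (Quotient (Setoid.ker (Sum.elim i (fun y : Fin 0 => y.elim0))))
      = Nat.card (Set.range (Sum.elim i (fun y : Fin 0 => y.elim0))) :=
        Nat.card_congr (Setoid.quotientKerEquivRange _)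
    _ ≤ Nat.card (Fin n) := Nat.card_le_card_of_injective _ Subtype.val_injective
    _ = n := by simp

/-- With `u_{ij}` as in a group-theoretical quantum group,
the intertwining relations of `T̂_p^(n)` for `p ∈ P(k,0)` hold if and only if
`p` has more than `n` blocks or
`Σ_f u_{f₁i₁} ⋯ u_{f_ki_k} = 1` for all `i ∈ S_n(ind(p))`. -/
theorem hatT_intertwines_iff (A : Type*) [CStarAlgebra A] (n : ℕ) (hn : 0 < n)
    (u : Fin n → Fin n → A)
    (hsa : ∀ i j, star (u i j) = u i j)
    (hsaproj : ∀ i j, IsSelfAdjoint ((u i j) ^ 2))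
    (hproj : ∀ i j, IsIdempotentElem ((u i j) ^ 2))
    (hcentral : ∀ i j a, a * (u i j) ^ 2 = (u i j) ^ 2 * a)
    (hrow : ∀ i, ∑ j, (u i j) ^ 2 = 1)
    (hcol : ∀ j, ∑ i, (u i j) ^ 2 = 1)
    (k : ℕ) (p : Part k 0) :
    (∀ i : Fin k → Fin n,
        (∑ f : Fin k → Fin n,
          if kerPartA f (fun y : Fin 0 => y.elim0) = p then
            (List.ofFn fun t => u (f t) (i t)).prod else 0)
          = (if kerPartA i (fun y : Fin 0 => y.elim0) = p then (1 : A) else 0)) ↔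
      (n < blockCount p ∨
        ∀ i : Fin k → Fin n, kerPartA i (fun y : Fin 0 => y.elim0) = p →
          (∑ f : Fin k → Fin n, (List.ofFn fun t => u (f t) (i t)).prod) = 1) := by
  have hcube : ∀ a b : Fin n, u a b * (u a b) ^ 2 = u a b :=
    fun a b => aux_cube_eq_self (hsa a b) (hproj a b)
  -- vanishing of products with different kernels
  have hvan : ∀ i f : Fin k → Fin n,
      kerPartA f (fun y : Fin 0 => y.elim0) ≠ kerPartA i (fun y : Fin 0 => y.elim0) →
      (List.ofFn fun t => u (f t) (i t)).prod = 0 := by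
    intro i f hne
    have hns : ¬ ∀ s t, f s = f t ↔ i s = i t := fun h =>
      hne ((aux_kerPartA_eq_iff f i).mpr h)
    push_neg at hns
    obtain ⟨s, t, hst⟩ := hns
    set g : Fin k → A := fun r => u (f r) (i r) with hg
    have hmem : ∀ r : Fin k, g r ∈ List.ofFn g := fun r =>
      (List.mem_ofFn (f := g) (a := g r)).mpr ⟨r, rfl⟩
    have h1 : (List.ofFn g).prod * (g s) ^ 2 = (List.ofFn g).prod :=
      aux_prod_mul_sq (g s) (hcentral _ _) (hcube _ _) _ (hmem s)
    have h2 : (List.ofFn g).prod * (g t) ^ 2 = (List.ofFn g).prod :=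
      aux_prod_mul_sq (g t) (hcentral _ _) (hcube _ _) _ (hmem t)
    have horth : (g s) ^ 2 * (g t) ^ 2 = 0 := by
      rcases hst with ⟨hf, hi⟩ | ⟨hf, hi⟩
      · have := aux_ortho (e := fun j => (u (f s) j) ^ 2)
          (fun j => hsaproj (f s) j) (fun j => hproj (f s) j)
          (fun j a => hcentral (f s) j a) (hrow (f s)) hi
        simpa [hg, ← hf] using this
      · have := aux_ortho (e := fun r => (u r (i s)) ^ 2)
          (fun r => hsaproj r (i s)) (fun r => hproj r (i s))
          (fun r a => hcentral r (i s) a) (hcol (i s)) hf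
        simpa [hg, hi] using this
    calc (List.ofFn g).prod = (List.ofFn g).prod * (g t) ^ 2 := h2.symm
      _ = ((List.ofFn g).prod * (g s) ^ 2) * (g t) ^ 2 := by rw [h1]
      _ = (List.ofFn g).prod * ((g s) ^ 2 * (g t) ^ 2) := by rw [mul_assoc]
      _ = 0 := by rw [horth, mul_zero]
  constructor
  · intro hL
    refine Or.inr fun i hi => ?_
    have hLi := hL i
    rw [if_pos hi] at hLi
    rw [← hLi]
    refine Finset.sum_congr rfl fun f _ => ?_
    by_cases hf : kerPartA f (fun y : Fin 0 => y.elim0) = p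
    · rw [if_pos hf]
    · rw [if_neg hf]
      exact hvan i f (by rw [hi]; exact hf)
  · intro hR
    have hQ : ∀ i : Fin k → Fin n, kerPartA i (fun y : Fin 0 => y.elim0) = p →
        (∑ f : Fin k → Fin n, (List.ofFn fun t => u (f t) (i t)).prod) = 1 := by
      rcases hR with hR | hR
      · intro i hi
        exact absurd (hi ▸ aux_blockCount_ker_le i) (not_le.mpr hR)
      · exact hR
    intro i
    by_cases hi : kerPartA i (fun y : Fin 0 => y.elim0) = p
    · rw [if_pos hi, ← hQ i hi]
      refine Finset.sum_congr rfl fun f _ => ?_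
      by_cases hf : kerPartA f (fun y : Fin 0 => y.elim0) = p
      · rw [if_pos hf]
      · rw [if_neg hf]
        exact (hvan i f (by rw [hi]; exact hf)).symm
    · rw [if_neg hi]
      refine Finset.sum_eq_zero fun f _ => ?_
      by_cases hf : kerPartA f (fun y : Fin 0 => y.elim0) = p
      · rw [if_pos hf]
        exact hvan i f fun h => hi (h ▸ hf)
      · rw [if_neg hf]


end GTQG
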